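/- Let I be a monomial ideal with minimal generating set M and fix a total order ≻ on M. Then I is not bridge-friendly with respect to ≻ if and only if there exist a type-1 subset τ ⊆ M and monomials m_1 ≻ m_2 in M such that: (1) m_1 and m_2 are true gaps of τ, neither of which dominates any bridge of τ (in particular m_1, m_2 ∉ τ); and (2) both τ∪{m_1} and τ∪{m_2} are potentially-type-2. In this case m_2 can be chosen to be the ≻-smallest true gap of τ. Moreover, under conditions (1) and (2) there exists m_3 ≺ m_2 in M that is a bridge of τ∪{m_1,m_2}; in particular m_3 ∈ τ. -/

import Mathlib

open scoped Classical

noncomputable section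

namespace ChauHaMaithani

variable {V : Type*}

/-- The lcm of a finite set of monomials (exponent vectors): pointwise maximum. -/
def mlcm (σ : Finset (V → ℕ)) : V → ℕ := fun v => σ.sup fun g => g v

/-- `m` is a bridge of `σ`: `m ∈ σ` and dropping `m` does not change the lcm. -/
def IsBridge (σ : Finset (V → ℕ)) (m : V → ℕ) : Prop :=
  m ∈ σ ∧ mlcm (σ.erase m) = mlcm σ

/-- `m` is a gap of `σ`: `m ∉ σ` and adding `m` does not change the lcm. -/
def IsGap (σ : Finset (V → ℕ)) (m : V → ℕ) : Prop :=
  m ∉ σ ∧ mlcm (insert m σ) = mlcm σ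

/-- A total order `≻` on monomials is encoded by a ranking function `ord`:
`m ≻ m'` iff `ord m' < ord m` (injectivity on the generating set is assumed separately).
`m` is a true gap of `σ` if it is a gap and every bridge of `σ ∪ {m}` dominated by `m`
is already a bridge of `σ`. -/
def IsTrueGap (ord : (V → ℕ) → ℕ) (σ : Finset (V → ℕ)) (m : V → ℕ) : Prop :=
  IsGap σ m ∧ ∀ m', IsBridge (insert m σ) m' → ord m' < ord m → IsBridge σ m'

/-- `σ` is type-1: it has a true gap (in `M`) dominating none of its bridges. -/
def Type1 (M : Finset (V → ℕ)) (ord : (V → ℕ) → ℕ) (σ : Finset (V → ℕ)) : Prop :=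
  ∃ m ∈ M, IsTrueGap ord σ m ∧ ∀ b, IsBridge σ b → ¬ ord b < ord m

/-- `σ` is potentially-type-2: it has a bridge dominating none of its true gaps. -/
def PotType2 (M : Finset (V → ℕ)) (ord : (V → ℕ) → ℕ) (σ : Finset (V → ℕ)) : Prop :=
  ∃ b, IsBridge σ b ∧ ∀ m ∈ M, IsTrueGap ord σ m → ¬ ord m < ord b

/-- `b` is the `≻`-smallest bridge of `σ`. -/
def IsSBridge (ord : (V → ℕ) → ℕ) (σ : Finset (V → ℕ)) (b : V → ℕ) : Prop :=
  IsBridge σ b ∧ ∀ b', IsBridge σ b' → ord b ≤ ord b'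

/-- `σ` is type-2. -/
def Type2 (M : Finset (V → ℕ)) (ord : (V → ℕ) → ℕ) (σ : Finset (V → ℕ)) : Prop :=
  PotType2 M ord σ ∧
    ∀ σ' : Finset (V → ℕ), σ' ⊆ M → σ' ≠ σ → PotType2 M ord σ' →
      ∀ b b', IsSBridge ord σ b → IsSBridge ord σ' b' →
        σ'.erase b' = σ.erase b → ord b < ord b'

/-- `M` (the minimal generating set of a monomial ideal) is bridge-friendly w.r.t. `ord`:
every potentially-type-2 subset is type-2. -/
def BridgeFriendlyWrt (M : Finset (V → ℕ)) (ord : (V → ℕ) → ℕ) : Prop :=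
  ∀ σ ⊆ M, PotType2 M ord σ → Type2 M ord σ

/-- `M` is bridge-friendly: bridge-friendly w.r.t. some total order on `M`. -/
def BridgeFriendly (M : Finset (V → ℕ)) : Prop :=
  ∃ ord : (V → ℕ) → ℕ, Set.InjOn ord M ∧ BridgeFriendlyWrt M ord

/-- `σ = {m_1 ≻ ⋯ ≻ m_k} ⊆ M` is Lyubeznik-critical w.r.t. `ord`: there is no `m ∈ M` with
`m_t ≻ m` and `m ∣ lcm(m_1, …, m_t)` for some `1 < t ≤ k`. -/
def LyubCritical (M : Finset (V → ℕ)) (ord : (V → ℕ) → ℕ) (σ : Finset (V → ℕ)) : Prop :=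
  σ ⊆ M ∧ ¬ ∃ m ∈ M, ∃ t ∈ σ, (∃ u ∈ σ, ord t < ord u) ∧ ord m < ord t ∧
      ∀ v, m v ≤ mlcm (σ.filter fun g => ord t ≤ ord g) v

/-- `M` is Lyubeznik: for some total order on `M`, no Lyubeznik-critical subset has a
bridge (equivalently, the associated Lyubeznik resolution is minimal). -/
def IsLyubeznik (M : Finset (V → ℕ)) : Prop :=
  ∃ ord : (V → ℕ) → ℕ, Set.InjOn ord M ∧
    ∀ σ : Finset (V → ℕ), LyubCritical M ord σ → ∀ b, ¬ IsBridge σ b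

/-- The quadratic monomial `xy` attached to an edge `e = {x,y}`. -/
def edgeMon (e : Sym2 V) : V → ℕ := fun v => if v ∈ e then 1 else 0

/-- `mingens(I(G))`: the edge monomials of `G`. -/
def edgeGens [Fintype V] (G : SimpleGraph V) : Finset (V → ℕ) :=
  (Finset.univ.filter fun e : Sym2 V => e ∈ G.edgeSet).image edgeMon

/-- `mingens(I(G)^n)`: the monomials that are products of `n` edges of `G`. -/
def edgePowGens [Fintype V] (G : SimpleGraph V) (n : ℕ) : Finset (V → ℕ) :=
  (Finset.univ.filter fun f : Fin n → Sym2 V => ∀ i, f i ∈ G.edgeSet).image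
    fun f => ∑ i, edgeMon (f i)

/-- A graph is chordal if it contains no induced cycle of length at least 4. -/
def Chordal (G : SimpleGraph V) : Prop :=
  ∀ n, 4 ≤ n → IsEmpty (SimpleGraph.cycleGraph n ↪g G)


/-! ### Auxiliary lemmas -/

lemma mlcm_insert_apply (σ : Finset (V → ℕ)) (m : V → ℕ) (v : V) :
    mlcm (insert m σ) v = max (m v) (mlcm σ v) := by
  simp [mlcm, Finset.sup_insert]

lemma le_mlcm {σ : Finset (V → ℕ)} {m : V → ℕ} (h : m ∈ σ) (v : V) :
    m v ≤ mlcm σ v := Finset.le_sup (f := fun g => g v) h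

lemma gap_le {σ : Finset (V → ℕ)} {m : V → ℕ} (h : IsGap σ m) (v : V) :
    m v ≤ mlcm σ v :=
  (le_mlcm (Finset.mem_insert_self m σ) v).trans_eq (congrFun h.2 v)

lemma gap_of_le {σ : Finset (V → ℕ)} {m : V → ℕ} (hm : m ∉ σ)
    (h : ∀ v, m v ≤ mlcm σ v) : IsGap σ m :=
  ⟨hm, funext fun v => by rw [mlcm_insert_apply]; exact max_eq_right (h v)⟩

lemma bridge_insert_of_ne {τ : Finset (V → ℕ)} {c m : V → ℕ}
    (h : IsBridge τ c) (hmc : m ≠ c) : IsBridge (insert m τ) c := by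
  refine ⟨Finset.mem_insert_of_mem h.1, ?_⟩
  rw [Finset.erase_insert_of_ne hmc]
  funext v
  rw [mlcm_insert_apply, mlcm_insert_apply, congrFun h.2 v]

lemma gap_bridge_insert {σ : Finset (V → ℕ)} {m : V → ℕ} (h : IsGap σ m) :
    IsBridge (insert m σ) m :=
  ⟨Finset.mem_insert_self m σ, by rw [Finset.erase_insert h.1, h.2]⟩

/-- A true gap dominating no bridge is the smallest bridge after insertion. -/
lemma sbridge_insert {τ : Finset (V → ℕ)} {ord : (V → ℕ) → ℕ} {m : V → ℕ}
    (htg : IsTrueGap ord τ m) (hd : ∀ b, IsBridge τ b → ¬ ord b < ord m) :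
    IsSBridge ord (insert m τ) m := by
  refine ⟨gap_bridge_insert htg.1, fun b' hb' => ?_⟩
  by_contra hlt
  push_neg at hlt
  exact hd b' (htg.2 b' hb' hlt) hlt

/-- The forward direction, with `m₂` the smallest true gap. -/
lemma forward_aux {V : Type*} {M : Finset (V → ℕ)} {ord : (V → ℕ) → ℕ}
    (hinj : Set.InjOn ord M) (h : ¬ BridgeFriendlyWrt M ord) :
    ∃ τ ⊆ M, ∃ m₁ ∈ M, ∃ m₂ ∈ M,
      Type1 M ord τ ∧ ord m₂ < ord m₁ ∧
      IsTrueGap ord τ m₁ ∧ IsTrueGap ord τ m₂ ∧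
      (∀ b, IsBridge τ b → ¬ ord b < ord m₁) ∧
      (∀ b, IsBridge τ b → ¬ ord b < ord m₂) ∧
      PotType2 M ord (insert m₁ τ) ∧ PotType2 M ord (insert m₂ τ) ∧
      (∀ g ∈ M, IsTrueGap ord τ g → ord m₂ ≤ ord g) := by
  rw [BridgeFriendlyWrt] at h
  push_neg at h
  obtain ⟨σ, hσM, hpot, hnt2⟩ := h
  rw [Type2] at hnt2
  have hforall := (not_and.mp hnt2) hpot
  push_neg at hforall
  obtain ⟨σ', hσ'M, hne, hpot', b, b', hsb, hsb', herase, hble⟩ := hforall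
  set τ := σ.erase b with hτ
  have hbσ : b ∈ σ := hsb.1.1
  have hb'σ' : b' ∈ σ' := hsb'.1.1
  have hσeq : insert b τ = σ := Finset.insert_erase hbσ
  have herτ : σ'.erase b' = τ := herase
  have hσ'eq : insert b' τ = σ' := by rw [← herτ]; exact Finset.insert_erase hb'σ'
  have hbb' : b ≠ b' := by
    intro e
    apply hne
    rw [← hσ'eq, ← e, hσeq]
  have hbM : b ∈ M := hσM hbσ
  have hb'M : b' ∈ M := hσ'M hb'σ'
  have hlt : ord b' < ord b :=
    lt_of_le_of_ne hble (fun e => hbb' (hinj hbM hb'M e.symm))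
  have hbτ : b ∉ τ := Finset.notMem_erase b σ
  have hb'τ : b' ∉ τ := by rw [← herτ]; exact Finset.notMem_erase b' σ'
  have hmτσ : mlcm τ = mlcm σ := hsb.1.2
  have hmτσ' : mlcm τ = mlcm σ' := by rw [← herτ]; exact hsb'.1.2
  have hgb : IsGap τ b := ⟨hbτ, by rw [hσeq, hmτσ]⟩
  have hgb' : IsGap τ b' := ⟨hb'τ, by rw [hσ'eq, hmτσ']⟩
  have htgb : IsTrueGap ord τ b :=
    ⟨hgb, fun m' hm' hlt' =>
      absurd (hsb.2 m' (hσeq ▸ hm')) (not_le.mpr hlt')⟩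
  have htgb' : IsTrueGap ord τ b' :=
    ⟨hgb', fun m' hm' hlt' =>
      absurd (hsb'.2 m' (hσ'eq ▸ hm')) (not_le.mpr hlt')⟩
  have hdom : ∀ c, IsBridge τ c → ord b ≤ ord c := by
    intro c hc
    have hbc : b ≠ c := fun e => hbτ (by rw [e]; exact hc.1)
    exact hsb.2 c (hσeq ▸ bridge_insert_of_ne hc hbc)
  have hdom' : ∀ c, IsBridge τ c → ord b' ≤ ord c := by
    intro c hc
    have hbc : b' ≠ c := fun e => hb'τ (by rw [e]; exact hc.1)
    exact hsb'.2 c (hσ'eq ▸ bridge_insert_of_ne hc hbc)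
  -- minimal true gap of τ
  obtain ⟨g₀, hg₀T, hg₀min⟩ :=
    Finset.exists_min_image (M.filter fun g => IsTrueGap ord τ g) ord
      ⟨b', Finset.mem_filter.mpr ⟨hb'M, htgb'⟩⟩
  have hg₀M : g₀ ∈ M := (Finset.mem_filter.mp hg₀T).1
  have hg₀tg : IsTrueGap ord τ g₀ := (Finset.mem_filter.mp hg₀T).2
  have hg₀min' : ∀ g ∈ M, IsTrueGap ord τ g → ord g₀ ≤ ord g := fun g hgM hgt =>
    hg₀min g (Finset.mem_filter.mpr ⟨hgM, hgt⟩)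
  have hg₀b' : ord g₀ ≤ ord b' := hg₀min' b' hb'M htgb'
  have hg₀b : ord g₀ < ord b := lt_of_le_of_lt hg₀b' hlt
  -- PotType2 of insert g₀ τ
  have hg₀τ : g₀ ∉ τ := hg₀tg.1.1
  have hbr : IsBridge (insert g₀ τ) g₀ := gap_bridge_insert hg₀tg.1
  obtain ⟨bm, hbmS, hbmmin⟩ :=
    Finset.exists_min_image ((insert g₀ τ).filter fun c => IsBridge (insert g₀ τ) c)
      ord ⟨g₀, Finset.mem_filter.mpr ⟨hbr.1, hbr⟩⟩
  have hbmB : IsBridge (insert g₀ τ) bm := (Finset.mem_filter.mp hbmS).2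
  have hbmmin' : ∀ c, IsBridge (insert g₀ τ) c → ord bm ≤ ord c := fun c hc =>
    hbmmin c (Finset.mem_filter.mpr ⟨hc.1, hc⟩)
  have hbm_le : ord bm ≤ ord g₀ := hbmmin' g₀ hbr
  have hpot'' : PotType2 M ord (insert g₀ τ) := by
    refine ⟨bm, hbmB, ?_⟩
    intro m hmM hmtg hmlt
    -- m is a true gap of τ, smaller than g₀ : contradiction
    have hmτ : m ∉ τ := fun hx => hmtg.1.1 (Finset.mem_insert_of_mem hx)
    have hml : ∀ v, m v ≤ mlcm τ v := by
      intro v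
      have h1 := gap_le hmtg.1 v
      have h2 : mlcm (insert g₀ τ) v = mlcm τ v := congrFun hg₀tg.1.2 v
      omega
    have hmgap : IsGap τ m := gap_of_le hmτ hml
    have hmtgτ : IsTrueGap ord τ m := by
      refine ⟨hmgap, fun c hc hclt => ?_⟩
      exfalso
      have hcg : g₀ ≠ c := by
        intro e
        rw [← e] at hclt
        omega
      have hcb : IsBridge (insert g₀ (insert m τ)) c := bridge_insert_of_ne hc hcg
      rw [Finset.insert_comm] at hcb
      have hc'' := hmtg.2 c hcb hclt
      have := hbmmin' c hc''
      omega
    have := hg₀min' m hmM hmtgτ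
    omega
  -- assemble
  refine ⟨τ, (Finset.erase_subset b σ).trans hσM, b, hbM, g₀, hg₀M,
    ⟨b, hbM, htgb, fun c hc => not_lt.mpr (hdom c hc)⟩, hg₀b, htgb, hg₀tg,
    fun c hc => not_lt.mpr (hdom c hc),
    fun c hc => not_lt.mpr (le_trans hg₀b' (hdom' c hc)),
    by rw [hσeq]; exact hpot, hpot'', hg₀min'⟩

/-- The converse direction: the configuration implies not bridge-friendly. -/
lemma converse_aux {V : Type*} {M : Finset (V → ℕ)} {ord : (V → ℕ) → ℕ}
    {τ : Finset (V → ℕ)} {m₁ m₂ : V → ℕ}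
    (hτ : τ ⊆ M) (hm₁ : m₁ ∈ M) (hm₂ : m₂ ∈ M)
    (hlt : ord m₂ < ord m₁)
    (htg1 : IsTrueGap ord τ m₁) (htg2 : IsTrueGap ord τ m₂)
    (hd1 : ∀ b, IsBridge τ b → ¬ ord b < ord m₁)
    (hd2 : ∀ b, IsBridge τ b → ¬ ord b < ord m₂)
    (hp1 : PotType2 M ord (insert m₁ τ)) (hp2 : PotType2 M ord (insert m₂ τ)) :
    ¬ BridgeFriendlyWrt M ord := by
  intro hBF
  have ht := hBF (insert m₁ τ) (Finset.insert_subset hm₁ hτ) hp1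
  have hne : insert m₂ τ ≠ insert m₁ τ := by
    intro e
    have : m₂ ∈ insert m₁ τ := e ▸ Finset.mem_insert_self m₂ τ
    rcases Finset.mem_insert.mp this with h | h
    · rw [h] at hlt; omega
    · exact htg2.1.1 h
  have := ht.2 (insert m₂ τ) (Finset.insert_subset hm₂ hτ) hne hp2 m₁ m₂
    (sbridge_insert htg1 hd1) (sbridge_insert htg2 hd2)
    (by rw [Finset.erase_insert htg2.1.1, Finset.erase_insert htg1.1.1])
  omega

/-- **Lemma 2.8.** `I` is not bridge-friendly w.r.t. `≻` iff there are a type-1 set `τ`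
and `m₁ ≻ m₂` in `M` that are true gaps of `τ` dominating no bridge of `τ`, with
`τ ∪ {m₁}` and `τ ∪ {m₂}` potentially-type-2; `m₂` can be chosen to be the smallest
true gap of `τ`; and under these conditions there exists `m₃ ≺ m₂` that is a bridge of
`τ ∪ {m₁, m₂}` (in particular `m₃ ∈ τ`). -/
theorem not_bridgeFriendly_iff {V : Type*} (M : Finset (V → ℕ)) (ord : (V → ℕ) → ℕ)
    (hinj : Set.InjOn ord M) :
    (¬ BridgeFriendlyWrt M ord ↔
      ∃ τ ⊆ M, ∃ m₁ ∈ M, ∃ m₂ ∈ M,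
        Type1 M ord τ ∧ ord m₂ < ord m₁ ∧
        IsTrueGap ord τ m₁ ∧ IsTrueGap ord τ m₂ ∧
        (∀ b, IsBridge τ b → ¬ ord b < ord m₁) ∧
        (∀ b, IsBridge τ b → ¬ ord b < ord m₂) ∧
        PotType2 M ord (insert m₁ τ) ∧ PotType2 M ord (insert m₂ τ)) ∧
    (¬ BridgeFriendlyWrt M ord →
      ∃ τ ⊆ M, ∃ m₁ ∈ M, ∃ m₂ ∈ M,
        Type1 M ord τ ∧ ord m₂ < ord m₁ ∧
        IsTrueGap ord τ m₁ ∧ IsTrueGap ord τ m₂ ∧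
        (∀ b, IsBridge τ b → ¬ ord b < ord m₁) ∧
        (∀ b, IsBridge τ b → ¬ ord b < ord m₂) ∧
        PotType2 M ord (insert m₁ τ) ∧ PotType2 M ord (insert m₂ τ) ∧
        (∀ g ∈ M, IsTrueGap ord τ g → ord m₂ ≤ ord g)) ∧
    (∀ τ ⊆ M, ∀ m₁ ∈ M, ∀ m₂ ∈ M,
        Type1 M ord τ → ord m₂ < ord m₁ →
        IsTrueGap ord τ m₁ → IsTrueGap ord τ m₂ →
        (∀ b, IsBridge τ b → ¬ ord b < ord m₁) →
        (∀ b, IsBridge τ b → ¬ ord b < ord m₂) →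
        PotType2 M ord (insert m₁ τ) → PotType2 M ord (insert m₂ τ) →
        ∃ m₃ ∈ τ, ord m₃ < ord m₂ ∧ IsBridge (insert m₁ (insert m₂ τ)) m₃) := by
  refine ⟨?_, ?_, ?_⟩
  · constructor
    · intro h
      obtain ⟨τ, hτ, m₁, hm₁, m₂, hm₂, h1, h2, h3, h4, h5, h6, h7, h8, _⟩ :=
        forward_aux hinj h
      exact ⟨τ, hτ, m₁, hm₁, m₂, hm₂, h1, h2, h3, h4, h5, h6, h7, h8⟩
    · rintro ⟨τ, hτ, m₁, hm₁, m₂, hm₂, _, h2, h3, h4, h5, h6, h7, h8⟩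
      exact converse_aux hτ hm₁ hm₂ h2 h3 h4 h5 h6 h7 h8
  · exact fun h => forward_aux hinj h
  · intro τ hτ m₁ hm₁ m₂ hm₂ _ hlt htg1 htg2 hd1 hd2 hp1 hp2
    obtain ⟨b, hb, hbt⟩ := hp1
    have hbm : ord m₁ ≤ ord b := (sbridge_insert htg1 hd1).2 b hb
    have hm₂ne : m₂ ∉ insert m₁ τ := by
      intro hx
      rcases Finset.mem_insert.mp hx with h | h
      · rw [h] at hlt; omega
      · exact htg2.1.1 h
    have hgap : IsGap (insert m₁ τ) m₂ := by
      refine gap_of_le hm₂ne ?_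
      intro v
      have h1 := gap_le htg2.1 v
      rw [mlcm_insert_apply]
      omega
    have hnt : ¬ IsTrueGap ord (insert m₁ τ) m₂ := by
      intro ht
      exact hbt m₂ hm₂ ht (lt_of_lt_of_le hlt hbm)
    rw [IsTrueGap] at hnt
    push_neg at hnt
    obtain ⟨c, hc1, hc2, _⟩ := hnt hgap
    have hcm₁ : c ≠ m₁ := by intro e; rw [e] at hc2; omega
    have hcm₂ : c ≠ m₂ := by intro e; rw [e] at hc2; omega
    have hcτ : c ∈ τ := by
      have := hc1.1
      rcases Finset.mem_insert.mp this with h | h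
      · exact absurd h hcm₂
      · rcases Finset.mem_insert.mp h with h' | h'
        · exact absurd h' hcm₁
        · exact h'
    refine ⟨c, hcτ, hc2, ?_⟩
    rwa [Finset.insert_comm] at hc1

end ChauHaMaithani
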